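/- Let l < 0 < u be real numbers and let T(l, u) = {(x, z) ∈ ℝ² : l ≤ x ≤ u, z ≥ 0, z ≥ x, z ≤ u·(x − l)/(u − l)}. Then for every â ∈ ℝ, the minimum over (x, z) ∈ T(l, u) of the linear function (max(â, 0)·u/(u − l))·x − â·z equals max(â, 0)·u·l/(u − l). -/

import Mathlib

/-- Per-coordinate computation for an ambiguous ReLU: evaluating the decomposition dual at
the Wong–Kolter dual variables, the minimum over the PLANET triangle `T(l,u)` of the linear
function `(max â 0 * u/(u-l)) * x - â * z` equals `max â 0 * u * l / (u - l)`. -/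
theorem planet_triangle_wong_kolter_value (l u : ℝ) (hl : l < 0) (hu : 0 < u) (ahat : ℝ) :
    IsLeast
      {y : ℝ | ∃ p : ℝ × ℝ,
        (l ≤ p.1 ∧ p.1 ≤ u ∧ 0 ≤ p.2 ∧ p.1 ≤ p.2 ∧ p.2 ≤ u * (p.1 - l) / (u - l)) ∧
        y = (max ahat 0 * u / (u - l)) * p.1 - ahat * p.2}
      (max ahat 0 * u * l / (u - l)) := by
  have hul : (0:ℝ) < u - l := by linarith
  rcases le_or_gt ahat 0 with ha | ha
  · have hmax : max ahat 0 = 0 := max_eq_right ha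
    constructor
    · exact ⟨(0, 0), ⟨le_of_lt hl, le_of_lt hu, le_refl 0, le_refl 0,
        div_nonneg (by simp; nlinarith) hul.le⟩, by simp [hmax]⟩
    · rintro y ⟨⟨x, z⟩, ⟨_, _, hz0, _, _⟩, rfl⟩
      simp only [hmax, zero_mul, zero_div]
      have : ahat * z ≤ 0 := mul_nonpos_of_nonpos_of_nonneg ha hz0
      linarith
  · have hmax : max ahat 0 = ahat := max_eq_left ha.le
    constructor
    · refine ⟨(l, 0), ⟨le_refl l, by linarith, le_refl 0, hl.le, by simp⟩, ?_⟩
      simp only [hmax]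
      ring
    · rintro y ⟨⟨x, z⟩, ⟨_, _, _, _, hz⟩, rfl⟩
      simp only [hmax]
      rw [div_mul_eq_mul_div, div_sub' (ne_of_gt hul), div_le_div_iff₀ hul hul]
      have h1 := (le_div_iff₀ hul).mp hz
      nlinarith [mul_le_mul_of_nonneg_right (mul_le_mul_of_nonneg_left h1 ha.le) hul.le]
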